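/- Fix D > 0, α > 2, T > 0, s > 0 and g > 0. Then (2/D²)·∫_0^D r · exp(−s·g·r^{−α}·1{g·r^{−α} ≥ T}) dr = 1 − (1/D²)·[ min{D^α, g/T}^{2/α}·(1 − e^{−s·g·max{D^{−α}, T/g}}) + (s·g)^{2/α}·Γ(1 − 2/α, s·g·max{D^{−α}, T/g}) ], where 1{·} denotes the indicator function. -/

import Mathlib

open MeasureTheory

/-- Upper incomplete gamma function `Γ(a, x) = ∫_x^∞ t^(a-1) e^(-t) dt`. -/
noncomputable def uGamma (a x : ℝ) : ℝ := ∫ t in Set.Ioi x, t ^ (a - 1) * Real.exp (-t)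

open Set Filter Real intervalIntegral
open scoped Topology

lemma uGamma_int {a : ℝ} (ha : 0 < a) :
    IntegrableOn (fun t : ℝ => t ^ (a - 1) * Real.exp (-t)) (Set.Ioi 0) :=
  (Real.GammaIntegral_convergent ha).congr_fun (fun t _ => mul_comm _ _) measurableSet_Ioi

lemma uGamma_split {a : ℝ} (ha : 0 < a) {x y : ℝ} (hx : 0 < x) (hxy : x ≤ y) :
    uGamma a x = (∫ t in x..y, t ^ (a - 1) * Real.exp (-t)) + uGamma a y := by
  have h1 : IntegrableOn (fun t : ℝ => t ^ (a - 1) * Real.exp (-t)) (Ioc x y) :=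
    (uGamma_int ha).mono_set (fun t ht => hx.trans ht.1)
  have h2 : IntegrableOn (fun t : ℝ => t ^ (a - 1) * Real.exp (-t)) (Ioi y) :=
    (uGamma_int ha).mono_set (fun t ht => (hx.trans_le hxy).trans ht)
  rw [intervalIntegral.integral_of_le hxy]
  unfold uGamma
  rw [← setIntegral_union (Ioc_disjoint_Ioi le_rfl) measurableSet_Ioi h1 h2,
    Ioc_union_Ioi_eq_Ioi hxy]

lemma uGamma_eq_sub {a : ℝ} (ha : 0 < a) {x : ℝ} (hx : 0 < x) :
    uGamma a x = uGamma a 1 - ∫ t in (1:ℝ)..x, t ^ (a - 1) * Real.exp (-t) := by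
  rcases le_total x 1 with h | h
  · rw [uGamma_split ha hx h, intervalIntegral.integral_symm]; ring
  · have := uGamma_split ha one_pos h; linarith

lemma uGamma_hasDerivAt {a : ℝ} (ha : 0 < a) {x : ℝ} (hx : 0 < x) :
    HasDerivAt (uGamma a) (-(x ^ (a - 1) * Real.exp (-x))) x := by
  have hint : IntervalIntegrable (fun t : ℝ => t ^ (a - 1) * Real.exp (-t)) volume 1 x :=
    intervalIntegrable_iff.2 ((uGamma_int ha).mono_set
      (fun t ht => (lt_min one_pos hx).trans_le ht.1.le))
  have hmeas : StronglyMeasurableAtFilter (fun t : ℝ => t ^ (a - 1) * Real.exp (-t)) (𝓝 x) :=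
    ⟨Set.univ, Filter.univ_mem, (by fun_prop : Measurable (fun t : ℝ => t ^ (a - 1) * Real.exp (-t))).aestronglyMeasurable.restrict⟩
  have hcont : ContinuousAt (fun t : ℝ => t ^ (a - 1) * Real.exp (-t)) x :=
    (Real.continuousAt_rpow_const x (a - 1) (Or.inl hx.ne')).mul
      ((Real.continuous_exp.comp continuous_neg).continuousAt)
  have hD := (intervalIntegral.integral_hasDerivAt_right hint hmeas hcont).const_sub (uGamma a 1)
  apply hD.congr_of_eventuallyEq
  filter_upwards [isOpen_Ioi.mem_nhds hx] with y hy
  exact uGamma_eq_sub ha hy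

lemma uGamma_tendsto {a : ℝ} (ha : 0 < a) : Tendsto (uGamma a) atTop (𝓝 0) := by
  have hInt : IntegrableOn (fun t : ℝ => t ^ (a - 1) * Real.exp (-t)) (Ioi 1) :=
    (uGamma_int ha).mono_set (Ioi_subset_Ioi zero_le_one)
  have h := intervalIntegral_tendsto_integral_Ioi 1 hInt tendsto_id
  have h2 : Tendsto (fun y => uGamma a 1 - ∫ t in (1:ℝ)..y, t ^ (a - 1) * Real.exp (-t))
      atTop (𝓝 (uGamma a 1 - uGamma a 1)) := tendsto_const_nhds.sub h
  rw [sub_self] at h2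
  apply h2.congr'
  filter_upwards [eventually_gt_atTop 0] with y hy
  exact (uGamma_eq_sub ha hy).symm

lemma G_hasDerivAt (A α : ℝ) (hA : 0 < A) (hα : 2 < α) {r : ℝ} (hr : 0 < r) :
    HasDerivAt (fun r : ℝ =>
      (r ^ (2:ℕ) * Real.exp (-(A * r ^ (-α))) - A ^ (2/α) * uGamma (1 - 2/α) (A * r ^ (-α))) / 2)
      (r * Real.exp (-(A * r ^ (-α)))) r := by
  have hα0 : (0:ℝ) < α := by linarith
  have ha : 0 < 1 - 2/α := by
    rw [sub_pos, div_lt_one hα0]; linarith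
  have hXpos : 0 < A * r ^ (-α) := mul_pos hA (rpow_pos_of_pos hr _)
  have hX : HasDerivAt (fun r : ℝ => A * r ^ (-α)) (A * ((-α) * r ^ (-α - 1))) r :=
    (Real.hasDerivAt_rpow_const (Or.inl hr.ne')).const_mul A
  have hE : HasDerivAt (fun r : ℝ => Real.exp (-(A * r ^ (-α))))
      (Real.exp (-(A * r ^ (-α))) * -(A * ((-α) * r ^ (-α - 1)))) r := hX.neg.exp
  have hP : HasDerivAt (fun r : ℝ => r ^ (2:ℕ)) (2 * r) r := by
    simpa using hasDerivAt_pow 2 r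
  have h1 := hP.mul hE
  have h2 := (uGamma_hasDerivAt ha hXpos).comp r hX
  have hG := ((h1.sub (h2.const_mul (A ^ (2/α)))).div_const 2)
  convert hG using 1
  case e'_4 => rfl
  case e'_5 => rfl
  case e'_8 => rfl
  have ea : 1 - 2/α - 1 = -(2/α) := by ring
  have e1 : (A * r ^ (-α)) ^ (-(2/α)) = A ^ (-(2/α)) * r ^ (2:ℕ) := by
    rw [Real.mul_rpow hA.le (rpow_nonneg hr.le _), ← Real.rpow_mul hr.le]
    congr 1
    rw [show (-α) * (-(2/α)) = ((2:ℕ):ℝ) by push_cast; field_simp, Real.rpow_natCast]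
  have e2 : A ^ (2/α) * A ^ (-(2/α)) = 1 := by
    rw [← Real.rpow_add hA]; simp
  rw [ea, e1]
  set E := Real.exp (-(A * r ^ (-α)))
  set B := r ^ (-α - 1)
  linear_combination (r ^ (2:ℕ) * E * A * α * B / 2) * e2

lemma integral_f1 (A α : ℝ) (hA : 0 < A) (hα : 2 < α) {c : ℝ} (hc : 0 < c) :
    ∫ r in (0:ℝ)..c, r * Real.exp (-(A * r ^ (-α)))
      = (c ^ (2:ℕ) * Real.exp (-(A * c ^ (-α)))
          - A ^ (2/α) * uGamma (1 - 2/α) (A * c ^ (-α))) / 2 := by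
  have hα0 : (0:ℝ) < α := by linarith
  have ha : 0 < 1 - 2/α := by rw [sub_pos, div_lt_one hα0]; linarith
  set f : ℝ → ℝ := fun r => r * Real.exp (-(A * r ^ (-α))) with hf
  set G : ℝ → ℝ := fun r =>
    (r ^ (2:ℕ) * Real.exp (-(A * r ^ (-α)))
      - A ^ (2/α) * uGamma (1 - 2/α) (A * r ^ (-α))) / 2 with hG
  have hmble : Measurable f := by fun_prop
  have hbound : ∀ x ∈ Ioc (0:ℝ) c, ‖f x‖ ≤ c := by
    intro x hx
    have he : Real.exp (-(A * x ^ (-α))) ≤ 1 := by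
      rw [Real.exp_le_one_iff, neg_nonpos]
      exact mul_nonneg hA.le (rpow_nonneg hx.1.le _)
    rw [hf, Real.norm_eq_abs, abs_mul, abs_of_pos hx.1, abs_of_pos (Real.exp_pos _)]
    calc x * Real.exp (-(A * x ^ (-α))) ≤ c * 1 :=
          mul_le_mul hx.2 he (Real.exp_pos _).le hc.le
      _ = c := mul_one c
  have hIoc : IntegrableOn f (Ioc 0 c) := by
    apply Measure.integrableOn_of_bounded measure_Ioc_lt_top.ne hmble.aestronglyMeasurable
    filter_upwards [ae_restrict_mem measurableSet_Ioc] with x hx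
    exact hbound x hx
  have hI0c : IntervalIntegrable f volume 0 c :=
    (intervalIntegrable_iff_integrableOn_Ioc_of_le hc.le).2 hIoc
  -- FTC on [ε, c]
  have hFTC : ∀ ε ∈ Ioo (0:ℝ) c, (∫ r in ε..c, f r) = G c - G ε := by
    intro ε hε
    apply intervalIntegral.integral_eq_sub_of_hasDerivAt
    · intro x hx
      rw [uIcc_of_le hε.2.le] at hx
      exact G_hasDerivAt A α hA hα (hε.1.trans_le hx.1)
    · apply hI0c.mono_set
      rw [uIcc_of_le hε.2.le, uIcc_of_le hc.le]
      exact Icc_subset_Icc hε.1.le le_rfl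
  -- limit of the integral side
  have small : Tendsto (fun ε => ∫ r in (0:ℝ)..ε, f r) (𝓝[>] (0:ℝ)) (𝓝 0) := by
    apply squeeze_zero_norm' (a := fun ε => c * |ε|)
    · filter_upwards [Ioc_mem_nhdsGT_of_mem ⟨le_refl (0:ℝ), hc⟩] with ε hε
      have := intervalIntegral.norm_integral_le_of_norm_le_const
        (C := c) (f := f) (a := 0) (b := ε) ?_
      · simpa using this
      · intro x hx
        rw [uIoc_of_le hε.1.le] at hx
        exact hbound x ⟨hx.1, hx.2.trans hε.2⟩
    · have : Tendsto (fun ε : ℝ => c * |ε|) (𝓝 0) (𝓝 (c * |0|)) :=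
        (continuous_const.mul continuous_abs).tendsto 0
      simpa using this.mono_left nhdsWithin_le_nhds
  have L1 : Tendsto (fun ε => ∫ r in ε..c, f r) (𝓝[>] (0:ℝ)) (𝓝 (∫ r in (0:ℝ)..c, f r)) := by
    have := (tendsto_const_nhds (x := ∫ r in (0:ℝ)..c, f r)
      (f := 𝓝[>] (0:ℝ))).sub small
    rw [sub_zero] at this
    apply this.congr'
    filter_upwards [Ioc_mem_nhdsGT_of_mem ⟨le_refl (0:ℝ), hc⟩] with ε hε
    have h1 : IntervalIntegrable f volume 0 ε := by
      apply hI0c.mono_set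
      rw [uIcc_of_le hε.1.le, uIcc_of_le hc.le]
      exact Icc_subset_Icc le_rfl hε.2
    have h2 : IntervalIntegrable f volume ε c := by
      apply hI0c.mono_set
      rw [uIcc_of_le hε.2, uIcc_of_le hc.le]
      exact Icc_subset_Icc hε.1.le le_rfl
    have := intervalIntegral.integral_add_adjacent_intervals h1 h2
    linarith
  -- limit of G side
  have hXlim : Tendsto (fun ε : ℝ => A * ε ^ (-α)) (𝓝[>] (0:ℝ)) atTop := by
    apply Tendsto.const_mul_atTop hA
    have h1 : Tendsto (fun ε : ℝ => ε ^ α) (𝓝[>] (0:ℝ)) (𝓝[>] (0:ℝ)) := by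
      rw [tendsto_nhdsWithin_iff]
      constructor
      · have := ((Real.continuousAt_rpow_const 0 α (Or.inr hα0.le)).tendsto).mono_left
          (nhdsWithin_le_nhds (s := Ioi (0:ℝ)))
        rwa [Real.zero_rpow hα0.ne'] at this
      · filter_upwards [self_mem_nhdsWithin] with x hx
        exact rpow_pos_of_pos hx _
    have h2 := tendsto_inv_nhdsGT_zero.comp h1
    apply h2.congr'
    filter_upwards [self_mem_nhdsWithin] with x hx
    simp only [Function.comp_apply]
    rw [← Real.rpow_neg (le_of_lt hx)]
  have huG : Tendsto (fun ε : ℝ => uGamma (1 - 2/α) (A * ε ^ (-α))) (𝓝[>] (0:ℝ)) (𝓝 0) :=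
    (uGamma_tendsto ha).comp hXlim
  have hsq : Tendsto (fun ε : ℝ => ε ^ (2:ℕ) * Real.exp (-(A * ε ^ (-α)))) (𝓝[>] (0:ℝ)) (𝓝 0) := by
    apply squeeze_zero_norm' (a := fun ε => |ε| ^ (2:ℕ))
    · filter_upwards [self_mem_nhdsWithin] with ε (hε : 0 < ε)
      have he : Real.exp (-(A * ε ^ (-α))) ≤ 1 := by
        rw [Real.exp_le_one_iff, neg_nonpos]
        exact mul_nonneg hA.le (rpow_nonneg hε.le _)
      rw [Real.norm_eq_abs, abs_mul, abs_pow, abs_of_pos (Real.exp_pos _)]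
      calc |ε| ^ (2:ℕ) * Real.exp (-(A * ε ^ (-α))) ≤ |ε| ^ (2:ℕ) * 1 :=
            mul_le_mul_of_nonneg_left he (by positivity)
        _ = |ε| ^ (2:ℕ) := mul_one _
    · have : Tendsto (fun ε : ℝ => |ε| ^ (2:ℕ)) (𝓝 0) (𝓝 (|(0:ℝ)| ^ (2:ℕ))) :=
        (continuous_abs.pow 2).tendsto 0
      simpa using this.mono_left nhdsWithin_le_nhds
  have hGlim : Tendsto G (𝓝[>] (0:ℝ)) (𝓝 0) := by
    have := (hsq.sub (huG.const_mul (A ^ (2/α)))).div_const 2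
    simpa using this
  have L2 : Tendsto (fun ε => G c - G ε) (𝓝[>] (0:ℝ)) (𝓝 (G c)) := by
    have := (tendsto_const_nhds (x := G c) (f := 𝓝[>] (0:ℝ))).sub hGlim
    simpa using this
  have L2' : Tendsto (fun ε => ∫ r in ε..c, f r) (𝓝[>] (0:ℝ)) (𝓝 (G c)) := by
    apply L2.congr'
    filter_upwards [Ioo_mem_nhdsGT_of_mem ⟨le_refl (0:ℝ), hc⟩] with ε hε
    exact (hFTC ε hε).symm
  exact tendsto_nhds_unique L1 L2'

theorem stmt_6 (D α T s g : ℝ) (hD : 0 < D) (hα : 2 < α) (hT : 0 < T) (hs : 0 < s)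
    (hg : 0 < g) :
    (2 / D ^ 2) *
        ∫ r in (0:ℝ)..D,
          r * Real.exp (-(s * g * r ^ (-α) * (if T ≤ g * r ^ (-α) then (1:ℝ) else 0)))
      = 1 - (1 / D ^ 2) *
          (min (D ^ α) (g / T) ^ (2 / α) *
              (1 - Real.exp (-(s * g * max (D ^ (-α)) (T / g))))
            + (s * g) ^ (2 / α) * uGamma (1 - 2 / α) (s * g * max (D ^ (-α)) (T / g))) := by
  have hα0 : (0:ℝ) < α := by linarith
  have hA : 0 < s * g := mul_pos hs hg
  set m := min (D ^ α) (g / T) with hm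
  have hmpos : 0 < m := lt_min (rpow_pos_of_pos hD α) (div_pos hg hT)
  set c := m ^ (1/α) with hcdef
  have hcpos : 0 < c := rpow_pos_of_pos hmpos _
  have hcα : c ^ α = m := by
    rw [hcdef, ← Real.rpow_mul hmpos.le, one_div, inv_mul_cancel₀ hα0.ne', Real.rpow_one]
  have hcD : c ≤ D := by
    by_contra h
    push_neg at h
    have := Real.rpow_lt_rpow hD.le h hα0
    rw [hcα] at this
    exact absurd (min_le_left (D ^ α) (g / T)) (not_le.2 this)
  have hc2 : c ^ (2:ℕ) = m ^ (2/α) := by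
    rw [hcdef, ← Real.rpow_natCast (m ^ (1/α)) 2, ← Real.rpow_mul hmpos.le]
    norm_num
    rw [show α⁻¹ * 2 = 2/α by ring]
  have hcneg : c ^ (-α) = max (D ^ (-α)) (T / g) := by
    have h1 : c ^ (-α) = m⁻¹ := by rw [Real.rpow_neg hcpos.le, hcα]
    rw [h1, hm, Real.rpow_neg hD.le, ← inv_div g T]
    rcases le_total (D ^ α) (g / T) with h | h
    · rw [min_eq_left h, max_eq_left (inv_anti₀ (rpow_pos_of_pos hD α) h)]
    · rw [min_eq_right h, max_eq_right (inv_anti₀ (div_pos hg hT) h)]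
  have hiff : ∀ r : ℝ, 0 < r → (T ≤ g * r ^ (-α) ↔ r ^ α ≤ g / T) := by
    intro r hr
    have hgr : g * r ^ (-α) = g / r ^ α := by
      rw [Real.rpow_neg hr.le]; ring
    rw [hgr, le_div_iff₀ (rpow_pos_of_pos hr α), le_div_iff₀ hT, mul_comm]
  set f₀ : ℝ → ℝ := fun r =>
    r * Real.exp (-(s * g * r ^ (-α) * (if T ≤ g * r ^ (-α) then (1:ℝ) else 0))) with hf₀
  have hmes : Measurable f₀ := by
    apply measurable_id.mul
    apply Real.measurable_exp.comp
    apply Measurable.neg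
    apply Measurable.mul (by fun_prop)
    exact Measurable.ite (measurableSet_le measurable_const (by fun_prop))
      measurable_const measurable_const
  have hbound : ∀ x ∈ Ioc (0:ℝ) D, ‖f₀ x‖ ≤ D := by
    intro x hx
    have hnn : 0 ≤ s * g * x ^ (-α) * (if T ≤ g * x ^ (-α) then (1:ℝ) else 0) := by
      apply mul_nonneg (mul_nonneg hA.le (rpow_nonneg hx.1.le _))
      split <;> norm_num
    have he : Real.exp (-(s * g * x ^ (-α) * (if T ≤ g * x ^ (-α) then (1:ℝ) else 0))) ≤ 1 := by
      rw [Real.exp_le_one_iff, neg_nonpos]; exact hnn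
    rw [hf₀, Real.norm_eq_abs, abs_mul, abs_of_pos hx.1, abs_of_pos (Real.exp_pos _)]
    calc x * _ ≤ D * 1 := mul_le_mul hx.2 he (Real.exp_pos _).le hD.le
      _ = D := mul_one D
  have hIntD : IntervalIntegrable f₀ volume 0 D := by
    rw [intervalIntegrable_iff_integrableOn_Ioc_of_le hD.le]
    apply Measure.integrableOn_of_bounded measure_Ioc_lt_top.ne hmes.aestronglyMeasurable
    filter_upwards [ae_restrict_mem measurableSet_Ioc] with x hx
    exact hbound x hx
  have h1 : IntervalIntegrable f₀ volume 0 c := by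
    apply hIntD.mono_set
    rw [uIcc_of_le hcpos.le, uIcc_of_le hD.le]
    exact Icc_subset_Icc le_rfl hcD
  have h2 : IntervalIntegrable f₀ volume c D := by
    apply hIntD.mono_set
    rw [uIcc_of_le hcD, uIcc_of_le hD.le]
    exact Icc_subset_Icc hcpos.le le_rfl
  have hsplit : (∫ r in (0:ℝ)..D, f₀ r) = (∫ r in (0:ℝ)..c, f₀ r) + ∫ r in c..D, f₀ r :=
    (intervalIntegral.integral_add_adjacent_intervals h1 h2).symm
  have E1 : (∫ r in (0:ℝ)..c, f₀ r)
      = ∫ r in (0:ℝ)..c, r * Real.exp (-(s * g * r ^ (-α))) := by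
    apply intervalIntegral.integral_congr
    intro r hr
    rw [uIcc_of_le hcpos.le] at hr
    rcases eq_or_lt_of_le hr.1 with h | h
    · simp [hf₀, ← h]
    · have hind : T ≤ g * r ^ (-α) := by
        rw [hiff r h]
        calc r ^ α ≤ c ^ α := Real.rpow_le_rpow h.le hr.2 hα0.le
          _ = m := hcα
          _ ≤ g / T := min_le_right _ _
      simp only [hf₀, if_pos hind, mul_one]
  have E2 : (∫ r in c..D, f₀ r) = ∫ r in c..D, r := by
    apply intervalIntegral.integral_congr_ae
    apply ae_of_all
    intro x hx
    rw [uIoc_of_le hcD] at hx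
    have hx0 : 0 < x := hcpos.trans hx.1
    have hgt : g / T < x ^ α := by
      have hcx : m < x ^ α := by
        rw [← hcα]; exact Real.rpow_lt_rpow hcpos.le hx.1 hα0
      have hxD : x ^ α ≤ D ^ α := Real.rpow_le_rpow hx0.le hx.2 hα0.le
      rcases le_total (g / T) (D ^ α) with h | h
      · rwa [hm, min_eq_right h] at hcx
      · rw [hm, min_eq_left h] at hcx; linarith
    have hind : ¬ T ≤ g * x ^ (-α) := fun hc' => absurd ((hiff x hx0).1 hc') (not_le.2 hgt)
    simp [hf₀, if_neg hind]
  have hid : (∫ r in c..D, (r:ℝ)) = (D ^ 2 - c ^ 2) / 2 := integral_id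
  rw [hsplit, E1, E2, hid, integral_f1 (s * g) α hA hα hcpos, hcneg, hc2]
  have hD2 : (D:ℝ) ^ 2 ≠ 0 := pow_ne_zero 2 hD.ne'
  field_simp
  ring
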